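/- arXiv:2506.09711 — 4 statements merged into one kernel-verified Lean document; each statement's English description precedes it below -/
import Mathlib

section
/- Let $\|\cdot\|$ be a norm on $\mathbb{R}^p$, let $f: \mathbb{R}^p \to \mathbb{R}$ be convex, differentiable, and $L$-smooth with respect to $\|\cdot\|$ (meaning $\|\nabla f(x) - \nabla f(y)\|_* \le L\|x-y\|$ for all $x, y$), and let $x_\star$ be a global minimizer of $f$. Then for any $x \ne x_\star$, $\inf_{y} \{ f(y) + \frac{L}{2}\|x - y\|^2 \} \le f(x) - \frac{[f(x) - f(x_\star)]^2}{2L\|x - x_\star\|^2}$. -/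
open scoped RealInnerProductSpace
open Filter Topology

/-- Dual norm (with respect to the Euclidean inner product) of a norm `ν`. -/
noncomputable def dualNorm {p : ℕ} (ν : EuclideanSpace ℝ (Fin p) → ℝ)
    (x : EuclideanSpace ℝ (Fin p)) : ℝ :=
  sSup {t : ℝ | ∃ z, ν z ≤ 1 ∧ t = (inner ℝ x z : ℝ)}

section aux
variable {p : ℕ}
local notation "E" => EuclideanSpace ℝ (Fin p)

-- nu zero
lemma nu_zero (ν : E → ℝ) (hhom : ∀ (c : ℝ) y, ν (c • y) = |c| * ν y) : ν 0 = 0 := by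
  have := hhom 0 0; simpa using this

-- upper bound: ν w ≤ C * ‖w‖
lemma nu_upper (ν : E → ℝ) (hnn : ∀ y, 0 ≤ ν y) (hhom : ∀ (c : ℝ) y, ν (c • y) = |c| * ν y)
    (htri : ∀ y z, ν (y + z) ≤ ν y + ν z) :
    ∃ C : ℝ, 0 ≤ C ∧ ∀ w, ν w ≤ C * ‖w‖ := by
  classical
  refine ⟨∑ i : Fin p, ν (EuclideanSpace.single i 1), Finset.sum_nonneg fun i _ => ?_, fun w => ?_⟩
  · exact hnn _
  · have hw : w = ∑ i : Fin p, w i • EuclideanSpace.single i (1:ℝ) := by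
      ext j
      rw [WithLp.ofLp_sum, Finset.sum_apply]
      simp [EuclideanSpace.single_apply]
    have h1 := Finset.le_sum_of_subadditive ν (nu_zero ν hhom).le htri Finset.univ
      (fun i => w i • EuclideanSpace.single i (1:ℝ))
    rw [← hw] at h1
    refine h1.trans ?_
    rw [Finset.sum_mul]
    refine Finset.sum_le_sum fun i _ => ?_
    rw [hhom]
    have hle : |w i| ≤ ‖w‖ := by
      have : (inner ℝ (EuclideanSpace.single i (1:ℝ)) w : ℝ) = w i := by
        simp [EuclideanSpace.inner_single_left]
      calc |w i| = |(inner ℝ (EuclideanSpace.single i (1:ℝ)) w : ℝ)| := by rw [this]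
        _ ≤ ‖EuclideanSpace.single i (1:ℝ)‖ * ‖w‖ := abs_real_inner_le_norm _ _
        _ = ‖w‖ := by rw [EuclideanSpace.norm_single]; simp
    have hν : 0 ≤ ν (EuclideanSpace.single i (1:ℝ)) := hnn _
    nlinarith [mul_le_mul_of_nonneg_left hle hν]


-- lower bound via compactness
lemma nu_lower (ν : E → ℝ) (hnn : ∀ y, 0 ≤ ν y)
    (hhom : ∀ (c : ℝ) y, ν (c • y) = |c| * ν y)
    (htri : ∀ y z, ν (y + z) ≤ ν y + ν z)
    (hdef : ∀ y, ν y = 0 → y = 0) [Nontrivial (EuclideanSpace ℝ (Fin p))] :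
    ∃ m : ℝ, 0 < m ∧ ∀ z, m * ‖z‖ ≤ ν z := by
  obtain ⟨C, hC0, hC⟩ := nu_upper ν hnn hhom htri
  have hcont : Continuous ν := by
    have hlip : ∀ a b : E, |ν a - ν b| ≤ C * ‖a - b‖ := by
      intro a b
      have h1 : ν a ≤ ν b + ν (a - b) := by
        have := htri b (a - b); simpa using this
      have h2 : ν b ≤ ν a + ν (b - a) := by
        have := htri a (b - a); simpa using this
      have h3 : ν (b - a) = ν (a - b) := by
        have := hhom (-1) (a - b); simpa [neg_sub] using this
      have h4 := hC (a - b)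
      rw [abs_sub_le_iff]
      constructor <;> linarith
    rw [Metric.continuous_iff]
    intro b ε hε
    rcases le_or_gt C 0 with h | h
    · refine ⟨1, one_pos, fun a _ => ?_⟩
      have h1 := hlip a b
      have h2 : |ν a - ν b| ≤ 0 := h1.trans (by nlinarith [norm_nonneg (a - b)])
      rw [Real.dist_eq]
      linarith [abs_nonneg (ν a - ν b)]
    · refine ⟨ε / C, by positivity, fun a ha => ?_⟩
      rw [Real.dist_eq]
      calc |ν a - ν b| ≤ C * ‖a - b‖ := hlip a b
        _ < C * (ε / C) := by
            rw [dist_eq_norm] at ha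
            exact mul_lt_mul_of_pos_left ha h
        _ = ε := by field_simp
  obtain ⟨z0, hz0s, hz0min⟩ := (isCompact_sphere (0 : EuclideanSpace ℝ (Fin p)) 1).exists_isMinOn
    (NormedSpace.sphere_nonempty.2 zero_le_one) hcont.continuousOn
  have hz0n : ‖z0‖ = 1 := by simpa using mem_sphere_zero_iff_norm.1 hz0s
  have hz0ne : z0 ≠ 0 := by intro h; rw [h] at hz0n; simp at hz0n
  have hm : 0 < ν z0 := lt_of_le_of_ne (hnn z0) fun h => hz0ne (hdef z0 h.symm)
  refine ⟨ν z0, hm, fun z => ?_⟩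
  rcases eq_or_ne z 0 with rfl | hz
  · simp [nu_zero ν hhom]
  · have hzn : 0 < ‖z‖ := norm_pos_iff.2 hz
    have hmem : ‖z‖⁻¹ • z ∈ Metric.sphere (0 : EuclideanSpace ℝ (Fin p)) 1 := by
      simp [norm_smul, abs_of_pos (inv_pos.2 hzn), inv_mul_cancel₀ hzn.ne']
    have := hz0min hmem
    simp only [Set.mem_setOf_eq] at this
    rw [hhom, abs_of_pos (inv_pos.2 hzn)] at this
    rw [← mul_le_mul_iff_right₀ (inv_pos.2 hzn)]
    calc ‖z‖⁻¹ * (ν z0 * ‖z‖) = ν z0 := by field_simp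
      _ ≤ ‖z‖⁻¹ * ν z := this

-- pairing bound
lemma pairing (ν : E → ℝ) (hnn : ∀ y, 0 ≤ ν y)
    (hhom : ∀ (c : ℝ) y, ν (c • y) = |c| * ν y)
    (htri : ∀ y z, ν (y + z) ≤ ν y + ν z)
    (hdef : ∀ y, ν y = 0 → y = 0) [Nontrivial (EuclideanSpace ℝ (Fin p))]
    (u z : E) : (inner ℝ u z : ℝ) ≤ dualNorm ν u * ν z := by
  obtain ⟨m, hm, hml⟩ := nu_lower ν hnn hhom htri hdef
  have hbdd : BddAbove {t : ℝ | ∃ w, ν w ≤ 1 ∧ t = (inner ℝ u w : ℝ)} := by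
    refine ⟨‖u‖ * m⁻¹, fun t ht => ?_⟩
    obtain ⟨w, hw1, rfl⟩ := ht
    have h1 : ‖w‖ ≤ m⁻¹ := by
      rw [← mul_le_mul_iff_right₀ hm]
      calc m * ‖w‖ ≤ ν w := hml w
        _ ≤ 1 := hw1
        _ = m * m⁻¹ := by field_simp
    calc (inner ℝ u w : ℝ) ≤ ‖u‖ * ‖w‖ := real_inner_le_norm u w
      _ ≤ ‖u‖ * m⁻¹ := by nlinarith [norm_nonneg u]
  have hne : (0 : ℝ) ∈ {t : ℝ | ∃ w, ν w ≤ 1 ∧ t = (inner ℝ u w : ℝ)} :=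
    ⟨0, by simp [nu_zero ν hhom], by simp⟩
  rcases eq_or_lt_of_le (hnn z) with h0 | hpos
  · have hz : z = 0 := hdef z h0.symm
    have : (0:ℝ) ≤ dualNorm ν u := le_csSup hbdd hne
    subst hz
    rw [nu_zero ν hhom]
    simpa using this
  · have hmem : (inner ℝ u ((ν z)⁻¹ • z) : ℝ) ∈
        {t : ℝ | ∃ w, ν w ≤ 1 ∧ t = (inner ℝ u w : ℝ)} := by
      refine ⟨(ν z)⁻¹ • z, ?_, rfl⟩
      rw [hhom, abs_of_pos (inv_pos.2 hpos), inv_mul_cancel₀ hpos.ne']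
    have hle : (inner ℝ u ((ν z)⁻¹ • z) : ℝ) ≤ dualNorm ν u := le_csSup hbdd hmem
    rw [real_inner_smul_right] at hle
    calc (inner ℝ u z : ℝ) = ν z * ((ν z)⁻¹ * (inner ℝ u z : ℝ)) := by field_simp
      _ ≤ ν z * dualNorm ν u := by nlinarith
      _ = _ := mul_comm _ _

-- convexity gradient inequality
lemma convex_grad {f : E → ℝ} {f' : E → E}
    (hgrad : ∀ x, HasGradientAt f (f' x) x) (hconv : ConvexOn ℝ Set.univ f)
    (a b : E) : f a + (inner ℝ (f' a) (b - a) : ℝ) ≤ f b := by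
  set g : ℝ → ℝ := fun t => f (a + t • (b - a)) with hg
  have hc : ∀ t : ℝ, HasDerivAt (fun s : ℝ => a + s • (b - a)) (b - a) t := by
    intro t
    simpa using ((hasDerivAt_id t).smul_const (b - a)).const_add a
  have hfd : HasFDerivAt f (InnerProductSpace.toDual ℝ _ (f' a)) a :=
    (hgrad a).hasFDerivAt
  have hga : HasDerivAt g ((inner ℝ (f' a) (b - a) : ℝ)) 0 := by
    have h0 : a = a + (0:ℝ) • (b - a) := by simp
    have := (h0 ▸ hfd).comp_hasDerivAt (0:ℝ) (hc 0)
    simp at this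
    exact this
  have hslope : Filter.Tendsto (slope g 0) (𝓝[>] (0:ℝ)) (𝓝 (inner ℝ (f' a) (b - a) : ℝ)) :=
    (hasDerivAt_iff_tendsto_slope.1 hga).mono_left
      (nhdsWithin_mono 0 fun t ht => ne_of_gt ht)
  have hev : ∀ᶠ t in 𝓝[>] (0:ℝ), slope g 0 t ≤ f b - f a := by
    filter_upwards [Ioo_mem_nhdsGT_of_mem (Set.left_mem_Ico.2 one_pos)] with t ht
    have ht0 : 0 < t := ht.1
    have ht1 : t ≤ 1 := ht.2.le
    have hcomb : g t ≤ (1 - t) * f a + t * f b := by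
      have := hconv.2 (Set.mem_univ a) (Set.mem_univ b)
        (by linarith : (0:ℝ) ≤ 1 - t) ht0.le (by ring)
      have heq : (1 - t) • a + t • b = a + t • (b - a) := by
        module
      simpa [heq, smul_eq_mul] using this
    have hg0 : g 0 = f a := by simp [hg]
    rw [slope_def_field, sub_zero, div_le_iff₀ ht0, hg0]
    nlinarith
  linarith [le_of_tendsto hslope hev]

end aux

theorem stmt6 {p : ℕ} (ν : EuclideanSpace ℝ (Fin p) → ℝ)
    (hnn : ∀ y, 0 ≤ ν y)
    (hhom : ∀ (c : ℝ) y, ν (c • y) = |c| * ν y)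
    (htri : ∀ y z, ν (y + z) ≤ ν y + ν z)
    (hdef : ∀ y, ν y = 0 → y = 0)
    (f : EuclideanSpace ℝ (Fin p) → ℝ)
    (f' : EuclideanSpace ℝ (Fin p) → EuclideanSpace ℝ (Fin p))
    (hgrad : ∀ x, HasGradientAt f (f' x) x)
    (hconv : ConvexOn ℝ Set.univ f)
    (L : ℝ) (hL : 0 < L)
    (hsmooth : ∀ x y, dualNorm ν (f' x - f' y) ≤ L * ν (x - y))
    (xstar : EuclideanSpace ℝ (Fin p)) (hmin : ∀ y, f xstar ≤ f y)
    (x : EuclideanSpace ℝ (Fin p)) (hx : x ≠ xstar) :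
    sInf {v : ℝ | ∃ y, v = f y + L / 2 * (ν (x - y)) ^ 2} ≤
      f x - (f x - f xstar) ^ 2 / (2 * L * (ν (x - xstar)) ^ 2) := by
  haveI : Nontrivial (EuclideanSpace ℝ (Fin p)) := nontrivial_of_ne x xstar hx
  have hfz : f' xstar = 0 := by
    have hloc : IsLocalMin f xstar := Filter.Eventually.of_forall hmin
    have h0 := hloc.hasFDerivAt_eq_zero (hgrad xstar).hasFDerivAt
    exact (InnerProductSpace.toDual ℝ _).map_eq_zero_iff.1 h0
  set N : ℝ := ν (x - xstar) with hNdef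
  have hN : 0 < N := by
    rcases eq_or_lt_of_le (hnn (x - xstar)) with h | h
    · exact absurd (sub_eq_zero.1 (hdef _ h.symm)) hx
    · exact h
  set Δ : ℝ := f x - f xstar with hΔdef
  have hΔ0 : 0 ≤ Δ := by have := hmin x; simp [hΔdef]; linarith
  have hkey : Δ ≤ L * N ^ 2 := by
    have h1 := convex_grad hgrad hconv x xstar
    have h2 := pairing ν hnn hhom htri hdef (f' x - f' xstar) (x - xstar)
    have h3 := hsmooth x xstar
    have h4 : (inner ℝ (f' x - f' xstar) (x - xstar) : ℝ) =
        -(inner ℝ (f' x) (xstar - x) : ℝ) := by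
      rw [hfz, sub_zero, ← inner_neg_right, neg_sub]
    have h5 : dualNorm ν (f' x - f' xstar) * ν (x - xstar) ≤ L * N * N := by
      have hd0 : 0 ≤ dualNorm ν (f' x - f' xstar) := by
        by_contra hcon
        push_neg at hcon
        nlinarith [pairing ν hnn hhom htri hdef (f' x - f' xstar) 0,
          nu_zero ν hhom, @inner_zero_right ℝ _ _ _ _ (f' x - f' xstar)]
      calc dualNorm ν (f' x - f' xstar) * ν (x - xstar)
          ≤ (L * ν (x - xstar)) * ν (x - xstar) := by nlinarith
        _ = L * N * N := by rw [← hNdef]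
    nlinarith
  set t : ℝ := Δ / (L * N ^ 2) with htdef
  have hLN : 0 < L * N ^ 2 := by positivity
  have ht0 : 0 ≤ t := div_nonneg hΔ0 hLN.le
  have ht1 : t ≤ 1 := by rw [htdef, div_le_one hLN]; exact hkey
  set y : EuclideanSpace ℝ (Fin p) := x + t • (xstar - x) with hydef
  have hfy : f y ≤ (1 - t) * f x + t * f xstar := by
    have := hconv.2 (Set.mem_univ x) (Set.mem_univ xstar)
      (by linarith : (0:ℝ) ≤ 1 - t) ht0 (by ring)
    have heq : (1 - t) • x + t • xstar = y := by rw [hydef]; module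
    simpa [heq, smul_eq_mul] using this
  have hnxy : ν (x - y) = t * N := by
    have hxy : x - y = t • (x - xstar) := by rw [hydef]; module
    rw [hxy, hhom, abs_of_nonneg ht0, ← hNdef]
  have hbdd : BddBelow {v : ℝ | ∃ y, v = f y + L / 2 * (ν (x - y)) ^ 2} := by
    refine ⟨f xstar, fun v hv => ?_⟩
    obtain ⟨y', rfl⟩ := hv
    have h1 := hmin y'
    have h2 : 0 ≤ L / 2 * (ν (x - y')) ^ 2 := by positivity
    linarith
  have hmem : f y + L / 2 * (ν (x - y)) ^ 2 ∈
      {v : ℝ | ∃ y, v = f y + L / 2 * (ν (x - y)) ^ 2} := ⟨y, rfl⟩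
  have hstep := csInf_le hbdd hmem
  have hval : f y + L / 2 * (ν (x - y)) ^ 2 ≤ f x - Δ ^ 2 / (2 * L * N ^ 2) := by
    rw [hnxy]
    have harith : (1 - t) * f x + t * f xstar + L / 2 * (t * N) ^ 2 =
        f x - Δ ^ 2 / (2 * L * N ^ 2) := by
      rw [htdef, hΔdef]
      field_simp
      ring
    linarith
  calc sInf {v : ℝ | ∃ y, v = f y + L / 2 * (ν (x - y)) ^ 2}
      ≤ f y + L / 2 * (ν (x - y)) ^ 2 := hstep
    _ ≤ f x - Δ ^ 2 / (2 * L * N ^ 2) := hval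
    _ = f x - (f x - f xstar) ^ 2 / (2 * L * (ν (x - xstar)) ^ 2) := by
        rw [hΔdef, hNdef]
end

section
/- Let $a, b > 0$ with $2b < a$, and let $(\epsilon_t)_{t\ge 0}$ be a sequence of reals satisfying $\epsilon_{t+1} \le \epsilon_t - \frac{\epsilon_t^2}{a^2} + b^2$ for all $t \ge 0$. Then for all $t \ge 0$, $\epsilon_t \le (1 - 2b/a)^t \epsilon_0 + ab$. -/
theorem stmt8 (ε : ℕ → ℝ) (a b : ℝ) (ha : 0 < a) (hb : 0 < b) (hba : 2 * b < a)
    (hrec : ∀ t, ε (t + 1) ≤ ε t - (ε t) ^ 2 / a ^ 2 + b ^ 2) :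
    ∀ t : ℕ, ε t ≤ (1 - 2 * b / a) ^ t * ε 0 + a * b := by
  have hq : 0 < 1 - 2 * b / a := by
    rw [sub_pos, div_lt_one ha]; linarith
  intro t
  induction t with
  | zero => simp; nlinarith
  | succ t ih =>
    have h1 : ε (t + 1) - a * b ≤ (1 - 2 * b / a) * (ε t - a * b) := by
      have h := hrec t
      have hdiv : (ε t) ^ 2 / a ^ 2 = (ε t / a) ^ 2 := by rw [div_pow]
      have hs : (0:ℝ) ≤ (ε t / a - b) ^ 2 := sq_nonneg _
      have hab : 2 * b / a * (a * b) = 2 * b ^ 2 := by field_simp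
      have hea : 2 * b / a * ε t = 2 * b * (ε t / a) := by ring
      nlinarith [hs, hdiv]
    have h2 : ε t - a * b ≤ (1 - 2 * b / a) ^ t * ε 0 := by linarith
    have h3 := mul_le_mul_of_nonneg_left h2 hq.le
    calc ε (t + 1) ≤ (1 - 2 * b / a) * (ε t - a * b) + a * b := by linarith
      _ ≤ (1 - 2 * b / a) * ((1 - 2 * b / a) ^ t * ε 0) + a * b := by linarith
      _ = (1 - 2 * b / a) ^ (t + 1) * ε 0 + a * b := by ring
end

section
/- Suppose $X \in \mathbb{R}^{n \times n}$ is positive semidefinite with $\sum_{i=1}^n |X_{ii} - 1| \le \delta$. Then there exists a positive semidefinite matrix $X'$ with $X'_{ii} = 1$ for all $i$ such that for every symmetric matrix $A$, $\mathrm{Tr}[A(X - X')] \le 3\delta \|A\|_\infty$, where $\|A\|_\infty = \max_j \sum_i |A_{ij}|$. -/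
theorem stmt10 {n : ℕ} (X : Matrix (Fin n) (Fin n) ℝ) (δ : ℝ)
    (hX : X.PosSemidef) (hdiag : ∑ i, |X i i - 1| ≤ δ) :
    ∃ X' : Matrix (Fin n) (Fin n) ℝ, X'.PosSemidef ∧ (∀ i, X' i i = 1) ∧
      ∀ A : Matrix (Fin n) (Fin n) ℝ, A.IsHermitian →
        (A * (X - X')).trace ≤ 3 * δ * (⨆ j, ∑ i, |A i j|) := by
  classical
  have hsymm : ∀ i j, X j i = X i j := fun i j => by
    simpa using congrFun (congrFun hX.isHermitian i) j
  have hdnn : ∀ i, 0 ≤ X i i := fun i => by simpa using hX.dotProduct_mulVec_nonneg (Pi.single i 1)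
  -- key quadratic bound
  have hquad : ∀ i j, X i j ^ 2 ≤ X i i * X j j := by
    intro i j
    rcases eq_or_ne i j with rfl | hij
    · rw [sq]
    · have h : ∀ t : ℝ, 0 ≤ X i i * (t * t) + (2 * X i j) * t + X j j := by
        intro t
        have := hX.dotProduct_mulVec_nonneg (Pi.single i t + Pi.single j 1)
        simp only [RCLike.star_def, star_trivial] at this
        rw [Matrix.mulVec_add, Matrix.mulVec_single, Matrix.mulVec_single,
          add_dotProduct, single_dotProduct, single_dotProduct] at this
        simp only [Pi.add_apply] at this
        calc (0:ℝ) ≤ t * (X i i * t + X i j * 1) + 1 * (X j i * t + X j j * 1) := this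
        _ = X i i * (t * t) + (2 * X i j) * t + X j j := by rw [hsymm i j]; ring
      have := discrim_le_zero h
      rw [discrim] at this
      nlinarith [this]
  have hzero : ∀ i j, X i i = 0 → X i j = 0 := by
    intro i j h
    have := hquad i j
    rw [h, zero_mul] at this
    nlinarith [sq_nonneg (X i j)]
  set d : Fin n → ℝ := fun i => if X i i = 0 then 0 else (Real.sqrt (X i i))⁻¹ with hd
  set f : Fin n → ℝ := fun i => if X i i = 0 then 1 else 0 with hf
  set X' : Matrix (Fin n) (Fin n) ℝ :=
    Matrix.diagonal d * X * Matrix.diagonal d + Matrix.diagonal f with hX'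
  have hX'app : ∀ i j, X' i j = d i * X i j * d j + (if i = j then f i else 0) := by
    intro i j
    rw [hX', Matrix.add_apply, Matrix.mul_diagonal, Matrix.diagonal_mul, Matrix.diagonal_apply]
  refine ⟨X', ?_, ?_, ?_⟩
  · apply Matrix.PosSemidef.add
    · have := hX.conjTranspose_mul_mul_same (Matrix.diagonal d)
      simpa [Matrix.diagonal_conjTranspose] using this
    · rw [Matrix.posSemidef_diagonal_iff]
      intro i
      simp only [hf]
      split <;> norm_num
  · intro i
    rw [hX'app]
    simp only [if_pos rfl, hf, hd]
    rcases eq_or_ne (X i i) 0 with h | h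
    · simp [h]
    · rw [if_neg h, if_neg h]
      have hs : Real.sqrt (X i i) ^ 2 = X i i := Real.sq_sqrt (hdnn i)
      have hsne : Real.sqrt (X i i) ≠ 0 := by
        intro hc
        exact h (by rw [← hs, hc]; ring)
      field_simp
      simp [hs]
  · intro A hA
    set e : Fin n → ℝ := fun i => |X i i - 1| with he
    set S : ℝ := ⨆ j, ∑ i, |A i j| with hS
    have hAsymm : ∀ i j, A j i = A i j := fun i j => by
      simpa using congrFun (congrFun hA i) j
    have hen : ∀ i, 0 ≤ e i := fun i => abs_nonneg _
    have hδ : 0 ≤ δ := le_trans (Finset.sum_nonneg fun i _ => abs_nonneg _) hdiag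
    have hSnn : 0 ≤ S := Real.iSup_nonneg fun j => Finset.sum_nonneg fun i _ => abs_nonneg _
    have hcol : ∀ j, ∑ i, |A i j| ≤ S :=
      fun j => le_ciSup (f := fun j => ∑ i, |A i j|) (Finite.bddAbove_range _) j
    -- key entrywise bound
    have hkey : ∀ i j, |(X - X') i j| ≤ e i + e j := by
      intro i j
      rw [Matrix.sub_apply, hX'app]
      rcases eq_or_ne (X i i) 0 with h0 | h0
      · have hz : X i j = 0 := hzero i j h0
        simp only [hd, hf, if_pos h0, hz]
        rcases eq_or_ne i j with rfl | hij
        · simp only [if_pos rfl, if_pos h0, he]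
          rw [h0]
          norm_num
        · simp only [if_neg hij]
          norm_num
          positivity
      · rcases eq_or_ne (X j j) 0 with h1 | h1
        · have hz : X i j = 0 := by rw [← hsymm i j]; exact hzero j i h1
          have hij : i ≠ j := fun h => h0 (h ▸ h1)
          simp only [hd, hf, if_pos h1, hz, if_neg hij]
          norm_num
          positivity
        · have hi : 0 < X i i := lt_of_le_of_ne (hdnn i) (Ne.symm h0)
          have hj : 0 < X j j := lt_of_le_of_ne (hdnn j) (Ne.symm h1)
          have hfi : (if i = j then f i else 0) = 0 := by
            rcases eq_or_ne i j with rfl | hij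
            · simp [hf, h0]
            · simp [hij]
          rw [hfi, add_zero]
          simp only [hd, if_neg h0, if_neg h1]
          set s : ℝ := Real.sqrt (X i i) * Real.sqrt (X j j) with hs
          have hspos : 0 < s := by
            rw [hs]
            positivity
          have hs2 : s ^ 2 = X i i * X j j := by
            rw [hs, mul_pow, Real.sq_sqrt (hdnn i), Real.sq_sqrt (hdnn j)]
          have hXle : |X i j| ≤ s := by
            have h2 : |X i j| ^ 2 ≤ s ^ 2 := by rw [sq_abs, hs2]; exact hquad i j
            nlinarith [abs_nonneg (X i j), hspos]
          have hrw : X i j - (Real.sqrt (X i i))⁻¹ * X i j * (Real.sqrt (X j j))⁻¹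
              = (1 - s⁻¹) * X i j := by
            rw [hs, mul_inv]
            ring
          rw [hrw, abs_mul]
          have hb1 : |1 - s⁻¹| * |X i j| ≤ |1 - s⁻¹| * s :=
            mul_le_mul_of_nonneg_left hXle (abs_nonneg _)
          have hb2 : |1 - s⁻¹| * s = |s - 1| := by
            rw [← abs_of_pos hspos, ← abs_mul, abs_of_pos hspos]
            congr 1
            field_simp
          have hub_i : X i i ≤ 1 + e i := by
            have := le_abs_self (X i i - 1); rw [← he] at *; linarith [this]
          have hub_j : X j j ≤ 1 + e j := by
            have := le_abs_self (X j j - 1); linarith [this]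
          have hlb_i : 1 - e i ≤ X i i := by
            have := neg_abs_le (X i i - 1); linarith [this]
          have hlb_j : 1 - e j ≤ X j j := by
            have := neg_abs_le (X j j - 1); linarith [this]
          have hb3 : |s - 1| ≤ e i + e j := by
            rw [abs_le]
            constructor
            · nlinarith [hs2, hspos, hen i, hen j, hi, hj, mul_pos hi hj,
                mul_nonneg (hen i) (hen j)]
            · nlinarith [hs2, hspos, hen i, hen j, hi, hj,
                mul_nonneg (hen i) (hen j)]
          calc |1 - s⁻¹| * |X i j| ≤ |1 - s⁻¹| * s := hb1
          _ = |s - 1| := hb2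
          _ ≤ e i + e j := hb3
    -- trace bound
    have htr : (A * (X - X')).trace = ∑ i, ∑ j, A i j * (X - X') j i := by
      rw [Matrix.trace]
      simp [Matrix.diag, Matrix.mul_apply]
    rw [htr]
    have step1 : ∑ i, ∑ j, A i j * (X - X') j i ≤ ∑ i, ∑ j, |A i j| * (e j + e i) := by
      refine Finset.sum_le_sum fun i _ => Finset.sum_le_sum fun j _ => ?_
      calc A i j * (X - X') j i ≤ |A i j * (X - X') j i| := le_abs_self _
      _ = |A i j| * |(X - X') j i| := abs_mul _ _
      _ ≤ |A i j| * (e j + e i) := mul_le_mul_of_nonneg_left (hkey j i) (abs_nonneg _)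
    refine le_trans step1 ?_
    have expand : ∑ i, ∑ j, |A i j| * (e j + e i)
        = (∑ i, ∑ j, |A i j| * e j) + (∑ i, ∑ j, |A i j| * e i) := by
      rw [← Finset.sum_add_distrib]
      refine Finset.sum_congr rfl fun i _ => ?_
      rw [← Finset.sum_add_distrib]
      exact Finset.sum_congr rfl fun j _ => by ring
    rw [expand]
    have t1 : ∑ i, ∑ j, |A i j| * e j ≤ δ * S := by
      rw [Finset.sum_comm]
      calc ∑ j, ∑ i, |A i j| * e j = ∑ j, (∑ i, |A i j|) * e j := by
            exact Finset.sum_congr rfl fun j _ => (Finset.sum_mul _ _ _).symm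
      _ ≤ ∑ j, S * e j :=
            Finset.sum_le_sum fun j _ => mul_le_mul_of_nonneg_right (hcol j) (hen j)
      _ = S * ∑ j, e j := (Finset.mul_sum _ _ _).symm
      _ ≤ S * δ := mul_le_mul_of_nonneg_left hdiag hSnn
      _ = δ * S := mul_comm _ _
    have t2 : ∑ i, ∑ j, |A i j| * e i ≤ δ * S := by
      calc ∑ i, ∑ j, |A i j| * e i = ∑ i, (∑ j, |A j i|) * e i := by
            refine Finset.sum_congr rfl fun i _ => ?_
            rw [Finset.sum_mul]
            exact Finset.sum_congr rfl fun j _ => by rw [hAsymm j i]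
      _ ≤ ∑ i, S * e i :=
            Finset.sum_le_sum fun i _ => mul_le_mul_of_nonneg_right (hcol i) (hen i)
      _ = S * ∑ i, e i := (Finset.mul_sum _ _ _).symm
      _ ≤ S * δ := mul_le_mul_of_nonneg_left hdiag hSnn
      _ = δ * S := mul_comm _ _
    have : δ * S + δ * S ≤ 3 * δ * S := by nlinarith [mul_nonneg hδ hSnn]
    linarith [t1, t2, this]
end

section
/- Let $b \in \mathbb{R}^n$ with all entries strictly positive, and let $\kappa = \max_i b_i / \min_i b_i$. Suppose $X \succeq 0$ with $\sum_i |X_{ii} - b_i| \le \delta$. Then there exists $X' \succeq 0$ with $X'_{ii} = b_i$ for all $i$ such that for every symmetric $A$, $\mathrm{Tr}[A(X - X')] \le 3\kappa\delta \|A\|_\infty$. -/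
private lemma quad_psd {n : ℕ} {X : Matrix (Fin n) (Fin n) ℝ} (hX : X.PosSemidef)
    (i j : Fin n) (a c : ℝ) :
    0 ≤ a*a*X i i + a*c*(X i j) + c*a*(X j i) + c*c*(X j j) := by
  have h := hX.dotProduct_mulVec_nonneg (Pi.single i a + Pi.single j c)
  simp only [star_trivial, Matrix.mulVec_add, dotProduct_add, add_dotProduct,
    single_dotProduct, dotProduct_single, Matrix.mulVec_single,
    Pi.add_apply, Pi.smul_apply, op_smul_eq_mul, Matrix.col_apply] at h
  nlinarith [h]

private lemma entry_sq_le {n : ℕ} {X : Matrix (Fin n) (Fin n) ℝ} (hX : X.PosSemidef)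
    (i j : Fin n) : (X i j)^2 ≤ X i i * X j j := by
  have hdi : 0 ≤ X i i := by have := quad_psd hX i i 1 0; linarith
  have hdj : 0 ≤ X j j := by have := quad_psd hX j j 1 0; linarith
  have hsym : X j i = X i j := by
    have := congrFun (congrFun hX.1 i) j
    simpa [Matrix.conjTranspose_apply] using this
  rcases eq_or_lt_of_le hdj with hjj | hjj
  · have h2 := quad_psd hX i j (X i j) (-(X i i + 1))
    rw [hsym, ← hjj] at h2
    nlinarith [h2, sq_nonneg (X i j)]
  · have h1 := quad_psd hX i j (X j j) (-(X i j))
    rw [hsym] at h1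
    nlinarith [h1, hjj]

private lemma sqrt_ineq (x y : ℝ) (hy : 0 ≤ y) (h : x^2 ≤ y^2) (hx : 0 ≤ x) : x ≤ y := by
  calc x = Real.sqrt (x^2) := (Real.sqrt_sq hx).symm
    _ ≤ Real.sqrt (y^2) := Real.sqrt_le_sqrt h
    _ = y := Real.sqrt_sq hy

private lemma key3 (m B si sj βi βj : ℝ) (hsi : 0 ≤ si) (hsj : 0 ≤ sj)
    (hβi : 0 < βi) (hβj : 0 < βj) (hm : 0 < m)
    (hmi : m ≤ βi^2) (hmj : m ≤ βj^2) (hBi : βi^2 ≤ B) (hBj : βj^2 ≤ B) :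
    si*sj - min si βi * min sj βj ≤ (B/m)/2 * (|si^2-βi^2| + |sj^2-βj^2|) := by
  set K := B/m with hKdef
  have hK1 : 1 ≤ K := (one_le_div hm).2 (le_trans hmi hBi)
  have hK0 : 0 ≤ K := by linarith
  have hKm : K * m = B := div_mul_cancel₀ _ hm.ne'
  have hB0 : 0 ≤ B := le_trans (sq_nonneg βj) hBj
  have h2 : K*K*m = K*B := by rw [← hKm]; ring
  have hJI : βj ≤ K * βi := by
    refine sqrt_ineq _ _ (by positivity) ?_ hβj.le
    nlinarith [h2, mul_nonneg (mul_nonneg hK0 hK0) (sub_nonneg.2 hmi),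
      mul_nonneg (sub_nonneg.2 hK1) hB0]
  have hIJ : βi ≤ K * βj := by
    refine sqrt_ineq _ _ (by positivity) ?_ hβi.le
    nlinarith [h2, mul_nonneg (mul_nonneg hK0 hK0) (sub_nonneg.2 hmj),
      mul_nonneg (sub_nonneg.2 hK1) hB0]
  rcases le_total si βi with hi | hi <;> rcases le_total sj βj with hj | hj
  · rw [min_eq_left hi, min_eq_left hj]
    have h3 := mul_nonneg hK0 (add_nonneg (abs_nonneg (si^2-βi^2)) (abs_nonneg (sj^2-βj^2)))
    linarith
  · -- si ≤ βi, βj ≤ sj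
    rw [min_eq_left hi, min_eq_right hj]
    rw [abs_of_nonpos (sub_nonpos.2 (pow_le_pow_left₀ hsi hi 2)),
      abs_of_nonneg (sub_nonneg.2 (pow_le_pow_left₀ hβj.le hj 2))]
    have P1 : 0 ≤ K*(sj-βj)^2 := mul_nonneg hK0 (sq_nonneg _)
    have P2 : 0 ≤ (sj-βj)*(K*βj-βi) := mul_nonneg (by linarith) (by linarith)
    have P3 : 0 ≤ (sj-βj)*(βi-si) := mul_nonneg (by linarith) (by linarith)
    have P4 : 0 ≤ K*(βi^2-si^2) := mul_nonneg hK0 (sub_nonneg.2 (pow_le_pow_left₀ hsi hi 2))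
    linarith [P1, P2, P3, P4]
  · -- βi ≤ si, sj ≤ βj
    rw [min_eq_right hi, min_eq_left hj]
    rw [abs_of_nonneg (sub_nonneg.2 (pow_le_pow_left₀ hβi.le hi 2)),
      abs_of_nonpos (sub_nonpos.2 (pow_le_pow_left₀ hsj hj 2))]
    have P1 : 0 ≤ K*(si-βi)^2 := mul_nonneg hK0 (sq_nonneg _)
    have P2 : 0 ≤ (si-βi)*(K*βi-βj) := mul_nonneg (by linarith) (by linarith)
    have P3 : 0 ≤ (si-βi)*(βj-sj) := mul_nonneg (by linarith) (by linarith)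
    have P4 : 0 ≤ K*(βj^2-sj^2) := mul_nonneg hK0 (sub_nonneg.2 (pow_le_pow_left₀ hsj hj 2))
    linarith [P1, P2, P3, P4]
  · -- both big
    rw [min_eq_right hi, min_eq_right hj]
    rw [abs_of_nonneg (sub_nonneg.2 (pow_le_pow_left₀ hβi.le hi 2)),
      abs_of_nonneg (sub_nonneg.2 (pow_le_pow_left₀ hβj.le hj 2))]
    have hp : (0:ℝ) < 2*(βi*βj) := by positivity
    have P1 : 0 ≤ (K*βi-βj)*βj*(si^2-βi^2) :=
      mul_nonneg (mul_nonneg (by linarith) hβj.le) (sub_nonneg.2 (pow_le_pow_left₀ hβi.le hi 2))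
    have P2 : 0 ≤ (K*βj-βi)*βi*(sj^2-βj^2) :=
      mul_nonneg (mul_nonneg (by linarith) hβi.le) (sub_nonneg.2 (pow_le_pow_left₀ hβj.le hj 2))
    have P3 : 0 ≤ (si*βj-sj*βi)^2 := sq_nonneg _
    have hgoal : 2*(βi*βj)*(si*sj - βi*βj) ≤ 2*(βi*βj)*(K/2*(si^2-βi^2 + (sj^2-βj^2))) := by
      linarith [P1, P2, P3]
    have := le_of_mul_le_mul_left hgoal hp
    linarith

private lemma sqrt_min (x y : ℝ) : Real.sqrt (min x y) = min (Real.sqrt x) (Real.sqrt y) := by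
  rcases le_total x y with h | h
  · rw [min_eq_left h, min_eq_left (Real.sqrt_le_sqrt h)]
  · rw [min_eq_right h, min_eq_right (Real.sqrt_le_sqrt h)]

private lemma key2 (m B x y bx by' r : ℝ) (hm : 0 < m) (hmx : m ≤ bx) (hmy : m ≤ by')
    (hxB : bx ≤ B) (hyB : by' ≤ B) (hx : 0 ≤ x) (hy : 0 ≤ y) (hr : r^2 ≤ x*y) :
    |(1 - Real.sqrt (min x bx) / Real.sqrt x * (Real.sqrt (min y by') / Real.sqrt y)) * r|
      ≤ (B/m)/2 * (|x - bx| + |y - by'|) := by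
  have hbx : 0 < bx := lt_of_lt_of_le hm hmx
  have hby : 0 < by' := lt_of_lt_of_le hm hmy
  set sx := Real.sqrt x with hsx
  set sy := Real.sqrt y with hsy
  set mx := Real.sqrt (min x bx) with hmxd
  set my := Real.sqrt (min y by') with hmyd
  have hsx0 : 0 ≤ sx := Real.sqrt_nonneg _
  have hsy0 : 0 ≤ sy := Real.sqrt_nonneg _
  have hmx0 : 0 ≤ mx := Real.sqrt_nonneg _
  have hmy0 : 0 ≤ my := Real.sqrt_nonneg _
  have htx : mx / sx * sx = mx := by
    rcases eq_or_lt_of_le hx with h0 | h0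
    · have : min x bx = 0 := by rw [← h0, min_eq_left hbx.le]
      simp [hmxd, this]
    · have : sx ≠ 0 := (Real.sqrt_pos.2 h0).ne'
      field_simp
  have hty : my / sy * sy = my := by
    rcases eq_or_lt_of_le hy with h0 | h0
    · have : min y by' = 0 := by rw [← h0, min_eq_left hby.le]
      simp [hmyd, this]
    · have : sy ≠ 0 := (Real.sqrt_pos.2 h0).ne'
      field_simp
  have htx1 : mx / sx ≤ 1 := by
    rcases eq_or_lt_of_le hx with h0 | h0
    · have : min x bx = 0 := by rw [← h0, min_eq_left hbx.le]
      simp [hmxd, this]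
    · rw [div_le_one (Real.sqrt_pos.2 h0)]
      exact Real.sqrt_le_sqrt (min_le_left _ _)
  have hty1 : my / sy ≤ 1 := by
    rcases eq_or_lt_of_le hy with h0 | h0
    · have : min y by' = 0 := by rw [← h0, min_eq_left hby.le]
      simp [hmyd, this]
    · rw [div_le_one (Real.sqrt_pos.2 h0)]
      exact Real.sqrt_le_sqrt (min_le_left _ _)
  have htx0 : 0 ≤ mx / sx := div_nonneg hmx0 hsx0
  have hty0 : 0 ≤ my / sy := div_nonneg hmy0 hsy0
  have hrle : |r| ≤ sx * sy := by
    rw [hsx, hsy, ← Real.sqrt_mul hx]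
    rw [← Real.sqrt_sq_eq_abs]
    exact Real.sqrt_le_sqrt hr
  have htt : 0 ≤ 1 - mx / sx * (my / sy) := by nlinarith
  rw [abs_mul, abs_of_nonneg htt]
  have step1 : (1 - mx / sx * (my / sy)) * |r| ≤ sx * sy - mx * my := by
    have h1 : (1 - mx / sx * (my / sy)) * |r| ≤ (1 - mx / sx * (my / sy)) * (sx * sy) :=
      mul_le_mul_of_nonneg_left hrle htt
    have h2 : (1 - mx / sx * (my / sy)) * (sx * sy) = sx * sy - (mx / sx * sx) * (my / sy * sy) := by
      ring
    rw [htx, hty] at h2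
    linarith
  have step2 : sx * sy - mx * my ≤ (B/m)/2 * (|x - bx| + |y - by'|) := by
    have hβx : (0:ℝ) < Real.sqrt bx := Real.sqrt_pos.2 hbx
    have hβy : (0:ℝ) < Real.sqrt by' := Real.sqrt_pos.2 hby
    have e1 : mx = min sx (Real.sqrt bx) := by rw [hmxd, sqrt_min, hsx]
    have e2 : my = min sy (Real.sqrt by') := by rw [hmyd, sqrt_min, hsy]
    have e3 : sx^2 = x := Real.sq_sqrt hx
    have e4 : sy^2 = y := Real.sq_sqrt hy
    have e5 : (Real.sqrt bx)^2 = bx := Real.sq_sqrt hbx.le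
    have e6 : (Real.sqrt by')^2 = by' := Real.sq_sqrt hby.le
    have := key3 m B sx sy (Real.sqrt bx) (Real.sqrt by') hsx0 hsy0 hβx hβy hm
      (by rw [e5]; exact hmx) (by rw [e6]; exact hmy) (by rw [e5]; exact hxB)
      (by rw [e6]; exact hyB)
    rw [e1, e2]
    rw [e3, e4, e5, e6] at this
    exact this
  linarith


theorem stmt11 {n : ℕ} (hn : 0 < n) (b : Fin n → ℝ) (hb : ∀ i, 0 < b i)
    (X : Matrix (Fin n) (Fin n) ℝ) (δ : ℝ)
    (hX : X.PosSemidef) (hdiag : ∑ i, |X i i - b i| ≤ δ) :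
    ∃ X' : Matrix (Fin n) (Fin n) ℝ, X'.PosSemidef ∧ (∀ i, X' i i = b i) ∧
      ∀ A : Matrix (Fin n) (Fin n) ℝ, A.IsHermitian →
        (A * (X - X')).trace ≤
          3 * ((⨆ i, b i) / (⨅ i, b i)) * δ * (⨆ j, ∑ i, |A i j|) := by
  classical
  have hne : Nonempty (Fin n) := ⟨⟨0, hn⟩⟩
  set m := ⨅ i, b i with hmdef
  set B := ⨆ i, b i with hBdef
  have hmle : ∀ i, m ≤ b i := fun i => ciInf_le ((Set.finite_range b).bddBelow) i
  have hleB : ∀ i, b i ≤ B := fun i => le_ciSup ((Set.finite_range b).bddAbove) i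
  have hm0 : 0 < m := by
    obtain ⟨i0, -, h0⟩ := Finset.exists_min_image Finset.univ b ⟨⟨0, hn⟩, Finset.mem_univ _⟩
    exact lt_of_lt_of_le (hb i0) (le_ciInf fun j => h0 j (Finset.mem_univ j))
  have hK1 : 1 ≤ B/m := (one_le_div hm0).2 (le_trans (hmle ⟨0, hn⟩) (hleB ⟨0, hn⟩))
  have hXd : ∀ i, 0 ≤ X i i := fun i => by have := quad_psd hX i i 1 0; linarith
  set t : Fin n → ℝ := fun i => Real.sqrt (min (X i i) (b i)) / Real.sqrt (X i i) with htdef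
  set c : Fin n → ℝ := fun i => b i - min (X i i) (b i) with hcdef
  set X' := Matrix.diagonal t * X * Matrix.diagonal t + Matrix.diagonal c with hX'def
  have hentry : ∀ i j, X' i j = t i * X i j * t j + if i = j then c i else 0 := by
    intro i j
    rw [hX'def]
    simp [Matrix.mul_diagonal, Matrix.diagonal_mul, Matrix.add_apply, Matrix.diagonal_apply]
  have hXii : ∀ i, t i * X i i * t i = min (X i i) (b i) := by
    intro i
    have hmin0 : 0 ≤ min (X i i) (b i) := le_min (hXd i) (hb i).le
    have h1 : t i * Real.sqrt (X i i) = Real.sqrt (min (X i i) (b i)) := by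
      rcases eq_or_lt_of_le (hXd i) with h0 | h0
      · have : min (X i i) (b i) = 0 := by rw [← h0, min_eq_left (hb i).le]
        simp [htdef, this]
      · have hs : Real.sqrt (X i i) ≠ 0 := (Real.sqrt_pos.2 h0).ne'
        rw [htdef]
        field_simp
    have e : X i i = Real.sqrt (X i i) * Real.sqrt (X i i) := (Real.mul_self_sqrt (hXd i)).symm
    calc t i * X i i * t i
        = (t i * Real.sqrt (X i i)) * (t i * Real.sqrt (X i i)) := by
          conv_lhs => rw [e]
          ring
      _ = Real.sqrt (min (X i i) (b i)) * Real.sqrt (min (X i i) (b i)) := by rw [h1]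
      _ = min (X i i) (b i) := Real.mul_self_sqrt hmin0
  have hc0 : ∀ i, 0 ≤ c i := fun i => sub_nonneg.2 (min_le_right _ _)
  have hcd : ∀ i, c i ≤ |X i i - b i| := by
    intro i
    rcases le_total (X i i) (b i) with h | h
    · rw [hcdef]; simp only [min_eq_left h]
      rw [abs_of_nonpos (by linarith)]; ring_nf; exact le_refl _
    · rw [hcdef]; simp only [min_eq_right h]
      simp [abs_nonneg]
  refine ⟨X', ?_, ?_, ?_⟩
  · have h1 : (Matrix.diagonal t * X * Matrix.diagonal t).PosSemidef := by
      have := hX.mul_mul_conjTranspose_same (Matrix.diagonal t)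
      simpa [Matrix.diagonal_conjTranspose] using this
    have h2 : (Matrix.diagonal c).PosSemidef := Matrix.posSemidef_diagonal_iff.mpr hc0
    exact h1.add h2
  · intro i
    rw [hentry i i, if_pos rfl, hXii i]
    simp only [hcdef]
    ring
  · intro A hA
    set N := ⨆ j, ∑ i, |A i j| with hNdef
    have hcol : ∀ j, (∑ i, |A i j|) ≤ N := fun j =>
      le_ciSup (f := fun j => ∑ i, |A i j|) ((Set.finite_range _).bddAbove) j
    have hN0 : 0 ≤ N :=
      le_trans (Finset.sum_nonneg fun i _ => abs_nonneg _) (hcol ⟨0, hn⟩)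
    have hAsym : ∀ i j, A i j = A j i := by
      intro i j
      have := congrFun (congrFun hA j) i
      simpa [Matrix.conjTranspose_apply] using this
    set d : Fin n → ℝ := fun k => |X k k - b k| with hddef
    have hd0 : ∀ k, 0 ≤ d k := fun k => abs_nonneg _
    have hδ0 : 0 ≤ δ := le_trans (Finset.sum_nonneg fun i _ => abs_nonneg _) hdiag
    have hAd : ∀ i, |A i i| ≤ N := fun i =>
      le_trans (Finset.single_le_sum (fun k _ => abs_nonneg (A k i)) (Finset.mem_univ i)) (hcol i)
    -- trace expansion
    have inner : ∀ i, ∑ j, A i j * (X - X') j i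
        = (∑ j, A i j * ((1 - t j * t i) * X j i)) - A i i * c i := by
      intro i
      have hterm : ∀ j, A i j * (X - X') j i
          = A i j * ((1 - t j * t i) * X j i) - (if j = i then A i j * c j else 0) := by
        intro j
        rw [Matrix.sub_apply, hentry j i]
        split_ifs with h
        · subst h; ring
        · ring
      rw [Finset.sum_congr rfl fun j _ => hterm j, Finset.sum_sub_distrib]
      congr 1
      simp
    have htr : (A * (X - X')).trace
        = (∑ i, ∑ j, A i j * ((1 - t j * t i) * X j i)) - ∑ i, A i i * c i := by
      rw [Matrix.trace]
      simp only [Matrix.diag, Matrix.mul_apply]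
      rw [← Finset.sum_sub_distrib]
      exact Finset.sum_congr rfl fun i _ => inner i
    -- termwise bound for the main sum
    have hmain : ∀ i j, A i j * ((1 - t j * t i) * X j i)
        ≤ |A i j| * ((B/m)/2 * (d j + d i)) := by
      intro i j
      have hk := key2 m B (X j j) (X i i) (b j) (b i) (X j i) hm0 (hmle j) (hmle i)
        (hleB j) (hleB i) (hXd j) (hXd i) (entry_sq_le hX j i)
      have he : (1 - t j * t i) * X j i
          = (1 - Real.sqrt (min (X j j) (b j)) / Real.sqrt (X j j)
              * (Real.sqrt (min (X i i) (b i)) / Real.sqrt (X i i))) * X j i := by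
        rw [htdef]
      calc A i j * ((1 - t j * t i) * X j i)
          ≤ |A i j * ((1 - t j * t i) * X j i)| := le_abs_self _
        _ = |A i j| * |(1 - t j * t i) * X j i| := abs_mul _ _
        _ ≤ |A i j| * ((B/m)/2 * (d j + d i)) := by
            refine mul_le_mul_of_nonneg_left ?_ (abs_nonneg _)
            rw [he]
            simp only [hddef]
            exact hk
    have I1 : (∑ i, ∑ j, |A i j| * d j) ≤ δ * N := by
      rw [Finset.sum_comm]
      calc ∑ j, ∑ i, |A i j| * d j = ∑ j, (∑ i, |A i j|) * d j := by
            refine Finset.sum_congr rfl fun j _ => ?_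
            rw [Finset.sum_mul]
        _ ≤ ∑ j, N * d j := Finset.sum_le_sum fun j _ =>
            mul_le_mul_of_nonneg_right (hcol j) (hd0 j)
        _ = N * ∑ j, d j := by rw [Finset.mul_sum]
        _ ≤ N * δ := mul_le_mul_of_nonneg_left hdiag hN0
        _ = δ * N := mul_comm _ _
    have I2 : (∑ i, ∑ j, |A i j| * d i) ≤ δ * N := by
      calc ∑ i, ∑ j, |A i j| * d i = ∑ i, (∑ j, |A j i|) * d i := by
            refine Finset.sum_congr rfl fun i _ => ?_
            rw [Finset.sum_mul]
            exact Finset.sum_congr rfl fun j _ => by rw [hAsym i j]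
        _ ≤ ∑ i, N * d i := Finset.sum_le_sum fun i _ =>
            mul_le_mul_of_nonneg_right (hcol i) (hd0 i)
        _ = N * ∑ i, d i := by rw [Finset.mul_sum]
        _ ≤ N * δ := mul_le_mul_of_nonneg_left hdiag hN0
        _ = δ * N := mul_comm _ _
    have I3 : -(∑ i, A i i * c i) ≤ δ * N := by
      calc -(∑ i, A i i * c i) = ∑ i, -(A i i * c i) := by rw [Finset.sum_neg_distrib]
        _ ≤ ∑ i, N * d i := by
            refine Finset.sum_le_sum fun i _ => ?_
            have h1 : -(A i i * c i) ≤ |A i i| * c i := by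
              rw [← neg_mul]
              exact mul_le_mul_of_nonneg_right (neg_le_abs _) (hc0 i)
            exact le_trans h1 (mul_le_mul (hAd i) (hcd i) (hc0 i) hN0)
        _ = N * ∑ i, d i := by rw [Finset.mul_sum]
        _ ≤ N * δ := mul_le_mul_of_nonneg_left hdiag hN0
        _ = δ * N := mul_comm _ _
    have hS2 : (∑ i, ∑ j, A i j * ((1 - t j * t i) * X j i))
        ≤ (B/m)/2 * (δ * N + δ * N) := by
      calc (∑ i, ∑ j, A i j * ((1 - t j * t i) * X j i))
          ≤ ∑ i, ∑ j, |A i j| * ((B/m)/2 * (d j + d i)) :=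
            Finset.sum_le_sum fun i _ => Finset.sum_le_sum fun j _ => hmain i j
        _ = (B/m)/2 * ((∑ i, ∑ j, |A i j| * d j) + (∑ i, ∑ j, |A i j| * d i)) := by
            rw [← Finset.sum_add_distrib, Finset.mul_sum]
            refine Finset.sum_congr rfl fun i _ => ?_
            rw [← Finset.sum_add_distrib, Finset.mul_sum]
            exact Finset.sum_congr rfl fun j _ => by ring
        _ ≤ (B/m)/2 * (δ * N + δ * N) := by
            refine mul_le_mul_of_nonneg_left (add_le_add I1 I2) ?_
            positivity
    rw [htr]
    have hfin : (B/m)/2 * (δ * N + δ * N) + δ * N ≤ 3 * (B/m) * δ * N := by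
      nlinarith [mul_nonneg (sub_nonneg.2 hK1) (mul_nonneg hδ0 hN0), mul_nonneg hδ0 hN0]
    linarith [hS2, I3, hfin]
end
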